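/- Let p, q, γ₁, γ₂ be rational numbers with 0 ≤ γ₁ ≤ p, γ₂ > 0 and q > p > 0, let T = ConvexHull{(0,0),(p,0),(γ₁,γ₂)}, and let b be a positive integer such that f₁ = b/p, f₂ = b(p−γ₁)/(pγ₂), g₁ = b(q−p)/(pq) and g₂ = b(pq−γ₁(q−p))/(pqγ₂) are all integers. Then f₁ > g₁ > 0 and g₂ ≥ f₂ ≥ 0, the point (γ₁,γ₂) satisfies both f₁γ₁+f₂γ₂ = b and g₁γ₁+g₂γ₂ = b (so A₁ = (γ₁,γ₂)), and the triangle T₁ = ConvexHull{(b/f₁,0), (0,0), A₁} associated to the inequality f₁x₁+f₂x₂ mod b ≤ g₁x₁+g₂x₂ equals T. -/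
import Mathlib


/-- From a triangle `T = ConvexHull{(0,0),(p,0),(γ₁,γ₂)}` with `0 ≤ γ₁ ≤ p`, `γ₂ > 0`,
`q > p > 0`, and `b > 0` making `f₁ = b/p`, `f₂ = b(p−γ₁)/(pγ₂)`, `g₁ = b(q−p)/(pq)` and
`g₂ = b(pq−γ₁(q−p))/(pqγ₂)` integers, one gets `f₁ > g₁ > 0`, `g₂ ≥ f₂ ≥ 0`, the point
`(γ₁,γ₂)` lies on both lines `f₁x₁+f₂x₂ = b` and `g₁x₁+g₂x₂ = b` (so `A₁ = (γ₁,γ₂)`), and the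
triangle `T₁ = ConvexHull{(b/f₁,0),(0,0),A₁}` of the inequality
`f₁x₁+f₂x₂ mod b ≤ g₁x₁+g₂x₂` equals `T`. -/
theorem stmt18 (p q γ₁ γ₂ : ℚ) (hγ₁ : 0 ≤ γ₁) (hγ₁p : γ₁ ≤ p) (hγ₂ : 0 < γ₂)
    (hp : 0 < p) (hpq : p < q) (b f₁ f₂ g₁ g₂ : ℤ) (hb : 0 < b)
    (hf₁ : (f₁ : ℚ) = b / p) (hf₂ : (f₂ : ℚ) = b * (p - γ₁) / (p * γ₂))
    (hg₁ : (g₁ : ℚ) = b * (q - p) / (p * q))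
    (hg₂ : (g₂ : ℚ) = b * (p * q - γ₁ * (q - p)) / (p * q * γ₂)) :
    g₁ < f₁ ∧ 0 < g₁ ∧ f₂ ≤ g₂ ∧ 0 ≤ f₂ ∧
    (f₁ : ℚ) * γ₁ + (f₂ : ℚ) * γ₂ = b ∧ (g₁ : ℚ) * γ₁ + (g₂ : ℚ) * γ₂ = b ∧
    convexHull ℝ {(((b : ℝ) / (f₁ : ℝ), 0) : ℝ × ℝ), ((0, 0) : ℝ × ℝ),
        (((γ₁ : ℝ), (γ₂ : ℝ)) : ℝ × ℝ)} =
      convexHull ℝ {((0, 0) : ℝ × ℝ), (((p : ℝ), 0) : ℝ × ℝ),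
        (((γ₁ : ℝ), (γ₂ : ℝ)) : ℝ × ℝ)} := by
  have hbQ : (0 : ℚ) < (b : ℚ) := by exact_mod_cast hb
  have hq : 0 < q := hp.trans hpq
  have hqp : 0 < q - p := sub_pos.mpr hpq
  have hg₁pos : (0 : ℚ) < (g₁ : ℚ) := by rw [hg₁]; positivity
  have h1 : g₁ < f₁ := by
    have : (g₁ : ℚ) < (f₁ : ℚ) := by
      rw [hg₁, hf₁, div_lt_div_iff₀ (by positivity) hp]
      nlinarith [mul_pos hbQ (mul_pos hp hp)]
    exact_mod_cast this
  have h2 : 0 < g₁ := by exact_mod_cast hg₁pos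
  have h3 : f₂ ≤ g₂ := by
    have : (f₂ : ℚ) ≤ (g₂ : ℚ) := by
      rw [hf₂, hg₂, div_le_div_iff₀ (by positivity) (by positivity)]
      nlinarith [mul_nonneg (mul_nonneg hbQ.le hp.le) (mul_nonneg hγ₁ (mul_pos hγ₂ hγ₂).le)]
    exact_mod_cast this
  have h4 : 0 ≤ f₂ := by
    have : (0 : ℚ) ≤ (f₂ : ℚ) := by
      rw [hf₂]
      apply div_nonneg (mul_nonneg hbQ.le (sub_nonneg.mpr hγ₁p)) (by positivity)
    exact_mod_cast this
  have h5 : (f₁ : ℚ) * γ₁ + (f₂ : ℚ) * γ₂ = b := by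
    rw [hf₁, hf₂]; field_simp; ring
  have h6 : (g₁ : ℚ) * γ₁ + (g₂ : ℚ) * γ₂ = b := by
    rw [hg₁, hg₂]; field_simp; ring
  refine ⟨h1, h2, h3, h4, h5, h6, ?_⟩
  have hbf : ((b : ℝ) / (f₁ : ℝ)) = (p : ℝ) := by
    have h : (b : ℚ) / (f₁ : ℚ) = p := by rw [hf₁]; field_simp
    have := congrArg (fun x : ℚ => (x : ℝ)) h
    push_cast at this
    simpa using this
  rw [hbf]
  congr 1
  ext x
  simp only [Set.mem_insert_iff, Set.mem_singleton_iff]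
  tauto
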